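/- Suppose f : ℝ → ℝ has the property that for every ε > 0 there exists δ : ℝ → ℝ with δ(x) > 0 for all x such that |x − y| < min(δ(x), δ(y)) implies |f(x) − f(y)| < ε. Then for every nonempty closed set C ⊆ ℝ, the restriction of f to C has a point of continuity in C. -/

import Mathlib

open Filter Topology

theorem stmt_9 (f : ℝ → ℝ)
    (hgauge : ∀ ε > (0 : ℝ), ∃ δ : ℝ → ℝ, (∀ x, 0 < δ x) ∧
      ∀ x y : ℝ, |x - y| < min (δ x) (δ y) → |f x - f y| < ε)
    (C : Set ℝ) (hC : IsClosed C) (hCne : C.Nonempty) :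
    ∃ x ∈ C, ContinuousWithinAt f C x := by
  choose δ hδpos hδ using fun k : ℕ => hgauge (1 / (k + 1)) (by positivity)
  haveI : CompleteSpace C := hC.completeSpace_coe
  haveI : Nonempty C := hCne.to_subtype
  set S : ℕ → ℕ → Set C := fun k n => closure {x : C | 1 / (n + 1 : ℝ) ≤ δ k (x : ℝ)} with hS
  have hScover : ∀ k, (⋃ n, S k n) = Set.univ := by
    intro k
    ext x
    simp only [Set.mem_iUnion, Set.mem_univ, iff_true]
    obtain ⟨n, hn⟩ := exists_nat_gt (1 / δ k (x : ℝ))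
    refine ⟨n, subset_closure ?_⟩
    have hpos := hδpos k (x : ℝ)
    have hn' : 1 / δ k (x : ℝ) < (n : ℝ) + 1 := hn.trans (by linarith)
    rw [Set.mem_setOf_eq, div_le_iff₀ (by positivity)]
    rw [div_lt_iff₀ hpos] at hn'
    nlinarith
  have hdense : ∀ k, Dense (⋃ n, interior (S k n)) := fun k =>
    dense_iUnion_interior_of_closed (fun n => isClosed_closure) (hScover k)
  have hne : (⋂ k, ⋃ n, interior (S k n)).Nonempty :=
    (dense_iInter_of_isOpen (fun k => isOpen_iUnion fun n => isOpen_interior) hdense).nonempty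
  obtain ⟨x, hx⟩ := hne
  refine ⟨(x : ℝ), x.2, ?_⟩
  -- key estimate
  have key : ∀ k : ℕ, ∃ r > (0 : ℝ), ∀ y : C, dist y x < r →
      |f (y : ℝ) - f (x : ℝ)| < 3 * (1 / (k + 1)) := by
    intro k
    have hxk : x ∈ ⋃ n, interior (S k n) := Set.mem_iInter.1 hx k
    obtain ⟨n, hxn⟩ := Set.mem_iUnion.1 hxk
    set m : ℝ := (n : ℝ) + 1 with hm
    have hmpos : (0 : ℝ) < m := by positivity
    obtain ⟨r₀, hr₀pos, hball⟩ := Metric.isOpen_iff.1 isOpen_interior x hxn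
    refine ⟨min r₀ (1 / (4 * m)), by positivity, ?_⟩
    intro y hy
    have hyball : y ∈ interior (S k n) := hball (lt_of_lt_of_le hy (min_le_left _ _))
    have hydist : dist y x < 1 / (4 * m) := lt_of_lt_of_le hy (min_le_right _ _)
    -- pick approximants from the closure
    have hclose : ∀ z : C, z ∈ S k n → ∃ z' : C, 1 / m ≤ δ k (z' : ℝ) ∧
        dist z z' < min (δ k (z : ℝ)) (1 / (8 * m)) := by
      intro z hz
      have := Metric.mem_closure_iff.1 hz (min (δ k (z : ℝ)) (1 / (8 * m)))
        (lt_min (hδpos k _) (by positivity))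
      obtain ⟨z', hz'mem, hz'dist⟩ := this
      exact ⟨z', hz'mem, hz'dist⟩
    obtain ⟨y', hy'δ, hy'dist⟩ := hclose y (interior_subset hyball)
    obtain ⟨x', hx'δ, hx'dist⟩ := hclose x (interior_subset hxn)
    have hdy : dist y y' = |(y : ℝ) - (y' : ℝ)| := by
      rw [Subtype.dist_eq, Real.dist_eq]
    have hdx : dist x x' = |(x : ℝ) - (x' : ℝ)| := by
      rw [Subtype.dist_eq, Real.dist_eq]
    have hdyx : dist y x = |(y : ℝ) - (x : ℝ)| := by
      rw [Subtype.dist_eq, Real.dist_eq]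
    have h8y : |(y : ℝ) - (y' : ℝ)| < 1 / (8 * m) := by
      rw [← hdy]; exact hy'dist.trans_le (min_le_right _ _)
    have h8x : |(x : ℝ) - (x' : ℝ)| < 1 / (8 * m) := by
      rw [← hdx]; exact hx'dist.trans_le (min_le_right _ _)
    have h1 : |f (y : ℝ) - f (y' : ℝ)| < 1 / (k + 1) := by
      apply hδ k
      refine lt_min ?_ ?_
      · rw [← hdy]; exact hy'dist.trans_le (min_le_left _ _)
      · exact h8y.trans_le (le_trans (by rw [div_le_div_iff₀ (by positivity) hmpos]; nlinarith) hy'δ)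
    have h2 : |f (x : ℝ) - f (x' : ℝ)| < 1 / (k + 1) := by
      apply hδ k
      refine lt_min ?_ ?_
      · rw [← hdx]; exact hx'dist.trans_le (min_le_left _ _)
      · exact h8x.trans_le (le_trans (by rw [div_le_div_iff₀ (by positivity) hmpos]; nlinarith) hx'δ)
    have h3 : |f (y' : ℝ) - f (x' : ℝ)| < 1 / (k + 1) := by
      apply hδ k
      have hyx : |(y : ℝ) - (x : ℝ)| < 1 / (4 * m) := by rw [← hdyx]; exact hydist
      have htri : |(y' : ℝ) - (x' : ℝ)| < 1 / m := by
        have : |(y' : ℝ) - (x' : ℝ)| ≤ |(y' : ℝ) - (y : ℝ)| + |(y : ℝ) - (x : ℝ)|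
            + |(x : ℝ) - (x' : ℝ)| := by
          calc |(y' : ℝ) - (x' : ℝ)| ≤ |(y' : ℝ) - (x : ℝ)| + |(x : ℝ) - (x' : ℝ)| :=
                abs_sub_le _ _ _
            _ ≤ |(y' : ℝ) - (y : ℝ)| + |(y : ℝ) - (x : ℝ)| + |(x : ℝ) - (x' : ℝ)| := by
                have := abs_sub_le (y' : ℝ) (y : ℝ) (x : ℝ)
                linarith
        have h8y' : |(y' : ℝ) - (y : ℝ)| < 1 / (8 * m) := by rw [abs_sub_comm]; exact h8y
        have : |(y' : ℝ) - (x' : ℝ)| < 1 / (8 * m) + 1 / (4 * m) + 1 / (8 * m) := by linarith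
        refine this.trans_le ?_
        rw [div_add_div _ _ (by positivity) (by positivity), div_add_div _ _ (by positivity)
          (by positivity), div_le_div_iff₀ (by positivity) hmpos]
        ring_nf
        nlinarith [pow_pos hmpos 3]
      exact lt_min (htri.trans_le hy'δ) (htri.trans_le hx'δ)
    have hA : |f (y : ℝ) - f (x : ℝ)| ≤ |f (y : ℝ) - f (y' : ℝ)| + |f (y' : ℝ) - f (x' : ℝ)|
        + |f (x' : ℝ) - f (x : ℝ)| := by
      have a := abs_sub_le (f (y : ℝ)) (f (y' : ℝ)) (f (x : ℝ))
      have b := abs_sub_le (f (y' : ℝ)) (f (x' : ℝ)) (f (x : ℝ))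
      linarith
    have h2' : |f (x' : ℝ) - f (x : ℝ)| < 1 / (k + 1) := by rw [abs_sub_comm]; exact h2
    linarith
  -- conclude continuity within C at ↑x
  rw [Metric.continuousWithinAt_iff]
  intro ε hε
  obtain ⟨k, hk⟩ := exists_nat_gt (3 / ε)
  have hkpos : (0 : ℝ) < (k : ℝ) + 1 := by positivity
  have hεk : 3 * (1 / ((k : ℝ) + 1)) < ε := by
    rw [mul_one_div, div_lt_iff₀ hkpos]
    have : 3 / ε < (k : ℝ) + 1 := hk.trans (by linarith)
    calc (3 : ℝ) = (3 / ε) * ε := by field_simp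
      _ < ((k : ℝ) + 1) * ε := by exact mul_lt_mul_of_pos_right this hε
      _ = ε * ((k : ℝ) + 1) := mul_comm _ _
  obtain ⟨r, hrpos, hr⟩ := key k
  refine ⟨r, hrpos, fun y hy hyd => ?_⟩
  have := hr ⟨y, hy⟩ (by rwa [Subtype.dist_eq])
  rw [Real.dist_eq]
  exact this.trans hεk
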